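/- Let φ be a completely additive state on ℓ∞(κ). Then for every f ∈ ℓ∞(κ), φ(f) = ∑'_{i ∈ κ} ν_φ({i}) · f(i), where the sum converges unconditionally in ℂ. -/

import Mathlib

open scoped ENNReal
open Filter

universe u

/-- The indicator function of `I` as an element of `ℓ∞(κ)`. -/
noncomputable def chi {κ : Type*} (I : Set κ) : lp (fun _ : κ => ℂ) ∞ :=
  ⟨I.indicator (fun _ => (1 : ℂ)), memℓp_infty ⟨1, by
    rintro x ⟨i, rfl⟩
    by_cases h : i ∈ I <;> simp [Set.indicator, h]⟩⟩

/-- A state on `ℓ∞(κ)`: a continuous linear functional with `φ 1 = 1` that takes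
nonnegative real values on functions with nonnegative real values. -/
structure IsState {κ : Type*} (φ : lp (fun _ : κ => ℂ) ∞ →L[ℂ] ℂ) : Prop where
  map_one : φ 1 = 1
  nonneg : ∀ f : lp (fun _ : κ => ℂ) ∞,
    (∀ i, ∃ r : ℝ, 0 ≤ r ∧ f i = r) → ∃ r : ℝ, 0 ≤ r ∧ φ f = r

section Aux

variable {κ : Type u}

lemma chi_apply (I : Set κ) (i : κ) :
    chi I i = I.indicator (fun _ => (1 : ℂ)) i := rfl

lemma chi_apply_mem {I : Set κ} {i : κ} (h : i ∈ I) : chi I i = 1 := by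
  rw [chi_apply, Set.indicator_of_mem h]

lemma chi_apply_not_mem {I : Set κ} {i : κ} (h : i ∉ I) : chi I i = 0 := by
  rw [chi_apply, Set.indicator_of_notMem h]

lemma chi_nn (I : Set κ) : ∀ i, ∃ r : ℝ, 0 ≤ r ∧ chi I i = r := by
  intro i
  by_cases h : i ∈ I
  · exact ⟨1, by norm_num, by rw [chi_apply_mem h]; norm_num⟩
  · exact ⟨0, le_refl 0, by rw [chi_apply_not_mem h]; norm_num⟩

/-- Construct an element of `ℓ∞(κ)` from a bounded function. -/
noncomputable def ofBdd (g : κ → ℂ) (c : ℝ) (hc : ∀ i, ‖g i‖ ≤ c) :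
    lp (fun _ : κ => ℂ) ∞ :=
  ⟨g, memℓp_infty ⟨c, by rintro x ⟨i, rfl⟩; exact hc i⟩⟩

lemma ofBdd_apply (g : κ → ℂ) (c : ℝ) (hc : ∀ i, ‖g i‖ ≤ c) (i : κ) :
    ofBdd g c hc i = g i := rfl

lemma chi_univ : chi (Set.univ : Set κ) = 1 := by
  apply lp.ext
  funext i
  rw [lp.infty_coeFn_one, Pi.one_apply, chi_apply_mem (Set.mem_univ i)]

lemma chi_compl (I : Set κ) : chi Iᶜ = 1 - chi I := by
  apply lp.ext
  funext i
  rw [lp.coeFn_sub, Pi.sub_apply, lp.infty_coeFn_one, Pi.one_apply]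
  by_cases h : i ∈ I
  · rw [chi_apply_mem h, chi_apply_not_mem (by simpa using h)]; ring
  · rw [chi_apply_not_mem h, chi_apply_mem (by simpa using h)]; ring

lemma chi_finset (F : Finset κ) :
    chi (↑F : Set κ) = ∑ i ∈ F, chi ({i} : Set κ) := by
  classical
  apply lp.ext
  funext j
  rw [lp.coeFn_sum, Finset.sum_apply]
  by_cases h : j ∈ F
  · have hzero : ∀ i ∈ F, i ≠ j → chi ({i} : Set κ) j = 0 := by
      intro i _ hij
      apply chi_apply_not_mem
      simp only [Set.mem_singleton_iff]
      exact fun hji => hij hji.symm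
    rw [chi_apply_mem (show j ∈ (↑F : Set κ) by simpa using h),
      Finset.sum_eq_single_of_mem j h hzero, chi_apply_mem (Set.mem_singleton j)]
  · rw [chi_apply_not_mem (by simpa using h)]
    refine (Finset.sum_eq_zero fun i hi => ?_).symm
    apply chi_apply_not_mem
    simp only [Set.mem_singleton_iff]
    rintro rfl
    exact h hi

variable {φ : lp (fun _ : κ => ℂ) ∞ →L[ℂ] ℂ}

/-- Key positivity bound: a nonnegative element vanishing on `F` and bounded by `c` has
`‖φ g‖ ≤ c * ‖φ (chi Fᶜ)‖`. -/
lemma bound_nn (hφ : IsState φ) (F : Finset κ) (g : lp (fun _ : κ => ℂ) ∞) (c : ℝ)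
    (hc : 0 ≤ c) (h0 : ∀ i ∈ F, g i = 0) (hnn : ∀ i, ∃ s : ℝ, 0 ≤ s ∧ g i = s)
    (hb : ∀ i, ‖g i‖ ≤ c) :
    ‖φ g‖ ≤ c * ‖φ (chi ((↑F : Set κ)ᶜ))‖ := by
  obtain ⟨s₁, hs₁, hg⟩ := hφ.nonneg g hnn
  obtain ⟨t, ht, hχ⟩ := hφ.nonneg (chi ((↑F : Set κ)ᶜ)) (chi_nn _)
  have hnn' : ∀ i, ∃ s : ℝ, 0 ≤ s ∧ ((c : ℂ) • chi ((↑F : Set κ)ᶜ) - g) i = s := by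
    intro i
    have hco : ((c : ℂ) • chi ((↑F : Set κ)ᶜ) - g) i
        = (c : ℂ) * chi ((↑F : Set κ)ᶜ) i - g i := by
      rw [lp.coeFn_sub, Pi.sub_apply, lp.coeFn_smul, Pi.smul_apply, smul_eq_mul]
    by_cases hi : i ∈ F
    · refine ⟨0, le_refl 0, ?_⟩
      rw [hco, chi_apply_not_mem (by simpa using hi), h0 i hi]
      norm_num
    · obtain ⟨s, hs, hgs⟩ := hnn i
      have hsc : s ≤ c := by
        have := hb i
        rw [hgs] at this
        simpa [abs_of_nonneg hs] using this
      refine ⟨c - s, by linarith, ?_⟩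
      rw [hco, chi_apply_mem (by simpa using hi), hgs]
      push_cast
      ring
  obtain ⟨s₂, hs₂, hsub⟩ := hφ.nonneg _ hnn'
  rw [map_sub, map_smul, smul_eq_mul, hχ, hg] at hsub
  have hreal : c * t - s₁ = s₂ := by
    have : ((c * t - s₁ : ℝ) : ℂ) = (s₂ : ℂ) := by push_cast; rw [← hsub]
    exact_mod_cast this
  have hle : s₁ ≤ c * t := by linarith
  rw [hg, hχ]
  rw [Complex.norm_real, Complex.norm_real, Real.norm_eq_abs, Real.norm_eq_abs,
    abs_of_nonneg hs₁, abs_of_nonneg ht]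
  exact hle

/-- Any element vanishing on `F` and bounded by `c` has `‖φ g‖ ≤ 4 * c * ‖φ (chi Fᶜ)‖`. -/
lemma bound_vanish (hφ : IsState φ) (F : Finset κ) (g : lp (fun _ : κ => ℂ) ∞) (c : ℝ)
    (hc : 0 ≤ c) (h0 : ∀ i ∈ F, g i = 0) (hb : ∀ i, ‖g i‖ ≤ c) :
    ‖φ g‖ ≤ 4 * c * ‖φ (chi ((↑F : Set κ)ᶜ))‖ := by
  have habs : ∀ (z : ℂ) (a : ℝ), |a| ≤ ‖z‖ → ‖((a ⊔ 0 : ℝ) : ℂ)‖ ≤ ‖z‖ := by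
    intro z a ha
    rw [Complex.norm_real, Real.norm_eq_abs, abs_of_nonneg (le_max_right a 0)]
    exact max_le (le_trans (le_abs_self a) ha) (norm_nonneg z)
  have hre : ∀ i, |(g i).re| ≤ ‖g i‖ := fun i => Complex.abs_re_le_norm _
  have him : ∀ i, |(g i).im| ≤ ‖g i‖ := fun i => Complex.abs_im_le_norm _
  set p₁ : lp (fun _ : κ => ℂ) ∞ := ofBdd (fun i => (((g i).re ⊔ 0 : ℝ) : ℂ)) c
    (fun i => le_trans (habs _ _ (hre i)) (hb i)) with hp₁
  set p₂ : lp (fun _ : κ => ℂ) ∞ := ofBdd (fun i => ((-(g i).re ⊔ 0 : ℝ) : ℂ)) c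
    (fun i => le_trans (habs _ _ (by rw [abs_neg]; exact hre i)) (hb i)) with hp₂
  set p₃ : lp (fun _ : κ => ℂ) ∞ := ofBdd (fun i => (((g i).im ⊔ 0 : ℝ) : ℂ)) c
    (fun i => le_trans (habs _ _ (him i)) (hb i)) with hp₃
  set p₄ : lp (fun _ : κ => ℂ) ∞ := ofBdd (fun i => ((-(g i).im ⊔ 0 : ℝ) : ℂ)) c
    (fun i => le_trans (habs _ _ (by rw [abs_neg]; exact him i)) (hb i)) with hp₄
  have hdec : g = p₁ - p₂ + Complex.I • (p₃ - p₄) := by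
    apply lp.ext
    funext i
    rw [lp.coeFn_add, Pi.add_apply, lp.coeFn_smul, Pi.smul_apply,
      lp.coeFn_sub, Pi.sub_apply, lp.coeFn_sub, Pi.sub_apply, smul_eq_mul]
    show g i = (((g i).re ⊔ 0 : ℝ) : ℂ) - ((-(g i).re ⊔ 0 : ℝ) : ℂ)
      + Complex.I * ((((g i).im ⊔ 0 : ℝ) : ℂ) - ((-(g i).im ⊔ 0 : ℝ) : ℂ))
    have h1 : (((g i).re ⊔ 0 : ℝ) : ℂ) - ((-(g i).re ⊔ 0 : ℝ) : ℂ) = ((g i).re : ℂ) := by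
      rw [← Complex.ofReal_sub, max_zero_sub_max_neg_zero_eq_self]
    have h2 : ((((g i).im ⊔ 0 : ℝ) : ℂ)) - ((-(g i).im ⊔ 0 : ℝ) : ℂ) = ((g i).im : ℂ) := by
      rw [← Complex.ofReal_sub, max_zero_sub_max_neg_zero_eq_self]
    rw [h1, h2]
    rw [mul_comm]
    exact (Complex.re_add_im (g i)).symm
  have key : ∀ (p : lp (fun _ : κ => ℂ) ∞) (u : κ → ℝ),
      (∀ i, 0 ≤ u i) → (∀ i, p i = ((u i : ℝ) : ℂ)) → (∀ i ∈ F, u i = 0) →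
      (∀ i, ‖p i‖ ≤ c) → ‖φ p‖ ≤ c * ‖φ (chi ((↑F : Set κ)ᶜ))‖ := by
    intro p u hu hpu hu0 hpb
    refine bound_nn hφ F p c hc ?_ (fun i => ⟨u i, hu i, hpu i⟩) hpb
    intro i hi
    rw [hpu i, hu0 i hi]
    norm_num
  have hz : ∀ i ∈ F, g i = 0 := h0
  have b₁ : ‖φ p₁‖ ≤ c * ‖φ (chi ((↑F : Set κ)ᶜ))‖ := by
    refine key p₁ (fun i => (g i).re ⊔ 0) (fun i => le_max_right _ _) (fun i => rfl) ?_
      (fun i => le_trans (habs _ _ (hre i)) (hb i))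
    intro i hi
    show (g i).re ⊔ 0 = 0
    rw [hz i hi]
    simp
  have b₂ : ‖φ p₂‖ ≤ c * ‖φ (chi ((↑F : Set κ)ᶜ))‖ := by
    refine key p₂ (fun i => -(g i).re ⊔ 0) (fun i => le_max_right _ _) (fun i => rfl) ?_
      (fun i => le_trans (habs _ _ (by rw [abs_neg]; exact hre i)) (hb i))
    intro i hi
    show -(g i).re ⊔ 0 = 0
    rw [hz i hi]
    simp
  have b₃ : ‖φ p₃‖ ≤ c * ‖φ (chi ((↑F : Set κ)ᶜ))‖ := by
    refine key p₃ (fun i => (g i).im ⊔ 0) (fun i => le_max_right _ _) (fun i => rfl) ?_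
      (fun i => le_trans (habs _ _ (him i)) (hb i))
    intro i hi
    show (g i).im ⊔ 0 = 0
    rw [hz i hi]
    simp
  have b₄ : ‖φ p₄‖ ≤ c * ‖φ (chi ((↑F : Set κ)ᶜ))‖ := by
    refine key p₄ (fun i => -(g i).im ⊔ 0) (fun i => le_max_right _ _) (fun i => rfl) ?_
      (fun i => le_trans (habs _ _ (by rw [abs_neg]; exact him i)) (hb i))
    intro i hi
    show -(g i).im ⊔ 0 = 0
    rw [hz i hi]
    simp
  rw [hdec, map_add, map_sub, map_smul, map_sub, smul_eq_mul]
  calc ‖φ p₁ - φ p₂ + Complex.I * (φ p₃ - φ p₄)‖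
      ≤ ‖φ p₁ - φ p₂‖ + ‖Complex.I * (φ p₃ - φ p₄)‖ := norm_add_le _ _
    _ ≤ (‖φ p₁‖ + ‖φ p₂‖) + (‖φ p₃‖ + ‖φ p₄‖) := by
        rw [norm_mul, Complex.norm_I, one_mul]
        exact add_le_add (norm_sub_le _ _) (norm_sub_le _ _)
    _ ≤ 4 * c * ‖φ (chi ((↑F : Set κ)ᶜ))‖ := by linarith

end Aux

set_option maxHeartbeats 1000000 in
theorem stmt_15 {κ : Type u} [Infinite κ] (φ : lp (fun _ : κ => ℂ) ∞ →L[ℂ] ℂ)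
    (hφ : IsState φ)
    (hca : ∀ (ι : Type u) (A : ι → Set κ), Pairwise (Function.onFun Disjoint A) →
      φ (chi (⋃ α, A α)) = ∑' α, φ (chi (A α))) :
    ∀ f : lp (fun _ : κ => ℂ) ∞,
      HasSum (fun i => φ (chi {i}) * f i) (φ f) := by
  classical
  intro f
  set μ : κ → ℂ := fun i => φ (chi ({i} : Set κ)) with hμ
  -- choose nonnegative reals representing μ
  have hμchoice : ∀ i, ∃ r : ℝ, 0 ≤ r ∧ μ i = r := fun i => hφ.nonneg _ (chi_nn _)
  choose r hr0 hrμ using hμchoice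
  -- total mass is 1
  have htsum : (1 : ℂ) = ∑' i, μ i := by
    have hdisj : Pairwise (Function.onFun Disjoint fun i : κ => ({i} : Set κ)) := by
      intro i j hij
      simp [Function.onFun, Set.disjoint_singleton, hij]
    have := hca κ (fun i => ({i} : Set κ)) hdisj
    rwa [Set.iUnion_of_singleton, chi_univ, hφ.map_one] at this
  -- partial sums of μ
  have hpartial : ∀ F : Finset κ, φ (chi (↑F : Set κ)) = ∑ i ∈ F, μ i := by
    intro F
    rw [chi_finset, map_sum]
  have hcomplval : ∀ F : Finset κ, φ (chi ((↑F : Set κ)ᶜ)) = 1 - ∑ i ∈ F, μ i := by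
    intro F
    rw [chi_compl, map_sub, hφ.map_one, hpartial]
  -- summability of r
  have hrsum : Summable r := by
    apply summable_of_sum_le (c := 1) hr0
    intro F
    obtain ⟨t, ht, hχt⟩ := hφ.nonneg (chi ((↑F : Set κ)ᶜ)) (chi_nn _)
    have h1 : ((∑ i ∈ F, r i : ℝ) : ℂ) = 1 - (t : ℂ) := by
      push_cast
      rw [← hχt, hcomplval]
      rw [Finset.sum_congr rfl (fun i _ => (hrμ i).symm)]
      ring
    have h2 : (∑ i ∈ F, r i : ℝ) = 1 - t := by
      exact_mod_cast h1
    linarith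
  have hμsummable : Summable μ := by
    have : μ = fun i => ((r i : ℝ) : ℂ) := funext hrμ
    rw [this]
    exact Complex.summable_ofReal.mpr hrsum
  have hμhassum : HasSum μ 1 := by
    have := hμsummable.hasSum
    rwa [← htsum] at this
  -- the truncation
  set T : Finset κ → lp (fun _ : κ => ℂ) ∞ := fun F =>
    ofBdd (fun j => if j ∈ F then 0 else f j) ‖f‖ (by
      intro j
      show ‖if j ∈ F then 0 else f j‖ ≤ ‖f‖
      by_cases h : j ∈ F
      · rw [if_pos h, norm_zero]; exact norm_nonneg f
      · rw [if_neg h]; exact lp.norm_apply_le_norm ENNReal.top_ne_zero f j) with hT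
  have hTdec : ∀ F : Finset κ, f = T F + ∑ i ∈ F, f i • chi ({i} : Set κ) := by
    intro F
    apply lp.ext
    funext j
    rw [lp.coeFn_add, Pi.add_apply, lp.coeFn_sum, Finset.sum_apply]
    have hTj : T F j = if j ∈ F then 0 else f j := rfl
    have hsum : ∑ i ∈ F, (f i • chi ({i} : Set κ)) j
        = ∑ i ∈ F, f i * chi ({i} : Set κ) j := by
      refine Finset.sum_congr rfl fun i _ => ?_
      rw [lp.coeFn_smul, Pi.smul_apply, smul_eq_mul]
    rw [hTj, hsum]
    by_cases h : j ∈ F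
    · have hzero : ∀ i ∈ F, i ≠ j → f i * chi ({i} : Set κ) j = 0 := by
        intro i _ hij
        rw [chi_apply_not_mem (show j ∉ ({i} : Set κ) by
          simp only [Set.mem_singleton_iff]; exact fun hji => hij hji.symm)]
        ring
      rw [Finset.sum_eq_single_of_mem j h hzero, chi_apply_mem (Set.mem_singleton j),
        if_pos h]
      ring
    · rw [if_neg h, Finset.sum_eq_zero, add_zero]
      intro i hi
      rw [chi_apply_not_mem (show j ∉ ({i} : Set κ) by
        simp only [Set.mem_singleton_iff]; rintro rfl; exact h hi)]
      ring
  have hkey : ∀ F : Finset κ, ∑ i ∈ F, μ i * f i = φ f - φ (T F) := by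
    intro F
    have := congrArg φ (hTdec F)
    rw [map_add, map_sum] at this
    have hterm : ∀ i ∈ F, φ (f i • chi ({i} : Set κ)) = μ i * f i := by
      intro i _
      rw [map_smul, smul_eq_mul, mul_comm]
    rw [Finset.sum_congr rfl hterm] at this
    rw [this]
    ring
  -- φ (T F) → 0
  have hTbound : ∀ F : Finset κ, ‖φ (T F)‖ ≤ 4 * ‖f‖ * ‖φ (chi ((↑F : Set κ)ᶜ))‖ := by
    intro F
    refine bound_vanish hφ F (T F) ‖f‖ (norm_nonneg f) ?_ ?_
    · intro i hi
      show (if i ∈ F then 0 else f i) = 0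
      rw [if_pos hi]
    · intro i
      show ‖if i ∈ F then 0 else f i‖ ≤ ‖f‖
      by_cases h : i ∈ F
      · rw [if_pos h, norm_zero]; exact norm_nonneg f
      · rw [if_neg h]; exact lp.norm_apply_le_norm ENNReal.top_ne_zero f i
  have hchicompl0 : Tendsto (fun F : Finset κ => φ (chi ((↑F : Set κ)ᶜ))) atTop (nhds 0) := by
    have h1 : Tendsto (fun F : Finset κ => ∑ i ∈ F, μ i) atTop (nhds 1) := hμhassum
    have h2 : Tendsto (fun F : Finset κ => (1 : ℂ) - ∑ i ∈ F, μ i) atTop (nhds (1 - 1)) :=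
      tendsto_const_nhds.sub h1
    rw [sub_self] at h2
    refine h2.congr fun F => ?_
    rw [hcomplval]
  have hT0 : Tendsto (fun F : Finset κ => φ (T F)) atTop (nhds 0) := by
    apply squeeze_zero_norm hTbound
    have := (hchicompl0.norm.const_mul (4 * ‖f‖))
    simpa only [norm_zero, mul_zero] using this
  show Tendsto (fun F : Finset κ => ∑ i ∈ F, μ i * f i) atTop (nhds (φ f))
  have h3 : Tendsto (fun F : Finset κ => φ f - φ (T F)) atTop (nhds (φ f - 0)) :=
    tendsto_const_nhds.sub hT0
  rw [sub_zero] at h3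
  exact h3.congr fun F => (hkey F).symm
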